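/- Let Δ be a symmetric d×d real matrix and s ≥ 1. Suppose |vᵀΔv| ≤ δ for every v ∈ ℝ^d with ‖v‖₂ ≤ 1 and ‖v‖₀ ≤ 2s. Then for every x ∈ ℝ^d, |xᵀΔx| ≤ 27δ ( ‖x‖₂² + (1/s)‖x‖₁² ). -/

import Mathlib

open Finset Matrix


lemma sqrt_sum_sq_add_le {d : ℕ} (u v : Fin d → ℝ) :
    Real.sqrt (∑ j, (u j + v j) ^ 2) ≤
      Real.sqrt (∑ j, u j ^ 2) + Real.sqrt (∑ j, v j ^ 2) := by
  set a := Real.sqrt (∑ j, u j ^ 2) with ha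
  set b := Real.sqrt (∑ j, v j ^ 2) with hb
  have ha0 : 0 ≤ a := Real.sqrt_nonneg _
  have hb0 : 0 ≤ b := Real.sqrt_nonneg _
  have hu0 : (0:ℝ) ≤ ∑ j, u j ^ 2 := Finset.sum_nonneg fun _ _ => sq_nonneg _
  have hv0 : (0:ℝ) ≤ ∑ j, v j ^ 2 := Finset.sum_nonneg fun _ _ => sq_nonneg _
  have ha2 : a ^ 2 = ∑ j, u j ^ 2 := Real.sq_sqrt hu0
  have hb2 : b ^ 2 = ∑ j, v j ^ 2 := Real.sq_sqrt hv0
  have hcs : ∑ j, u j * v j ≤ a * b := by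
    have h1 : (∑ j, u j * v j) ^ 2 ≤ (∑ j, u j ^ 2) * ∑ j, v j ^ 2 :=
      Finset.sum_mul_sq_le_sq_mul_sq _ _ _
    have h2 : ∑ j, u j * v j ≤ |∑ j, u j * v j| := le_abs_self _
    have h3 : |∑ j, u j * v j| = Real.sqrt ((∑ j, u j * v j) ^ 2) :=
      (Real.sqrt_sq_eq_abs _).symm
    calc ∑ j, u j * v j ≤ Real.sqrt ((∑ j, u j * v j) ^ 2) := h3 ▸ h2
      _ ≤ Real.sqrt ((∑ j, u j ^ 2) * ∑ j, v j ^ 2) := Real.sqrt_le_sqrt h1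
      _ = a * b := Real.sqrt_mul hu0 _
  have hsum : ∑ j, (u j + v j) ^ 2 ≤ (a + b) ^ 2 := by
    have : ∑ j, (u j + v j) ^ 2 = (∑ j, u j ^ 2) + 2 * (∑ j, u j * v j) + ∑ j, v j ^ 2 := by
      rw [Finset.mul_sum, ← Finset.sum_add_distrib, ← Finset.sum_add_distrib]
      exact Finset.sum_congr rfl fun j _ => by ring
    rw [this]; nlinarith
  calc Real.sqrt (∑ j, (u j + v j) ^ 2) ≤ Real.sqrt ((a + b) ^ 2) := Real.sqrt_le_sqrt hsum
    _ = a + b := by rw [Real.sqrt_sq (by linarith)]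

lemma symm_form {d : ℕ} (Δ : Matrix (Fin d) (Fin d) ℝ) (hΔ : Δ.IsSymm) (p q : Fin d → ℝ) :
    p ⬝ᵥ Δ.mulVec q = q ⬝ᵥ Δ.mulVec p := by
  rw [Matrix.dotProduct_mulVec, ← Matrix.mulVec_transpose, hΔ.eq, dotProduct_comm]

lemma bilin_sparse {d s : ℕ} (Δ : Matrix (Fin d) (Fin d) ℝ) (hΔ : Δ.IsSymm) (δ : ℝ)
    (hsparse : ∀ v : Fin d → ℝ, Real.sqrt (∑ j, v j ^ 2) ≤ 1 →
      {j | v j ≠ 0}.ncard ≤ 2 * s → |v ⬝ᵥ Δ.mulVec v| ≤ δ)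
    (u v : Fin d → ℝ)
    (hu : {j | u j ≠ 0}.ncard ≤ s) (hv : {j | v j ≠ 0}.ncard ≤ s) :
    |u ⬝ᵥ Δ.mulVec v| ≤
      2 * δ * (Real.sqrt (∑ j, u j ^ 2) * Real.sqrt (∑ j, v j ^ 2)) := by
  have hδ : 0 ≤ δ := by
    have := hsparse 0 (by simp) (by simp)
    simpa using this
  by_cases hu0 : u = 0
  · subst hu0
    simp only [zero_dotProduct, abs_zero]
    exact mul_nonneg (by linarith) (mul_nonneg (Real.sqrt_nonneg _) (Real.sqrt_nonneg _))
  by_cases hv0 : v = 0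
  · subst hv0
    simp only [Matrix.mulVec_zero, dotProduct_zero, abs_zero]
    exact mul_nonneg (by linarith) (mul_nonneg (Real.sqrt_nonneg _) (Real.sqrt_nonneg _))
  set a := Real.sqrt (∑ j, u j ^ 2) with hadef
  set b := Real.sqrt (∑ j, v j ^ 2) with hbdef
  have hsu : (0:ℝ) < ∑ j, u j ^ 2 := by
    obtain ⟨j, hj⟩ := Function.ne_iff.mp hu0
    exact Finset.sum_pos' (fun _ _ => sq_nonneg _) ⟨j, Finset.mem_univ _, by exact pow_pos (abs_pos.mpr hj) 2 |>.trans_eq (by rw [sq_abs])⟩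
  have hsv : (0:ℝ) < ∑ j, v j ^ 2 := by
    obtain ⟨j, hj⟩ := Function.ne_iff.mp hv0
    exact Finset.sum_pos' (fun _ _ => sq_nonneg _) ⟨j, Finset.mem_univ _, by exact pow_pos (abs_pos.mpr hj) 2 |>.trans_eq (by rw [sq_abs])⟩
  have ha : 0 < a := Real.sqrt_pos.mpr hsu
  have hb : 0 < b := Real.sqrt_pos.mpr hsv
  have ha2 : a ^ 2 = ∑ j, u j ^ 2 := Real.sq_sqrt hsu.le
  have hb2 : b ^ 2 = ∑ j, v j ^ 2 := Real.sq_sqrt hsv.le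
  set u' : Fin d → ℝ := a⁻¹ • u with hu'def
  set v' : Fin d → ℝ := b⁻¹ • v with hv'def
  have hsumu' : ∑ j, u' j ^ 2 = 1 := by
    simp only [hu'def, Pi.smul_apply, smul_eq_mul, mul_pow, ← Finset.mul_sum]
    rw [← ha2]; field_simp
  have hsumv' : ∑ j, v' j ^ 2 = 1 := by
    simp only [hv'def, Pi.smul_apply, smul_eq_mul, mul_pow, ← Finset.mul_sum]
    rw [← hb2]; field_simp
  have hnu' : Real.sqrt (∑ j, u' j ^ 2) = 1 := by rw [hsumu', Real.sqrt_one]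
  have hnv' : Real.sqrt (∑ j, v' j ^ 2) = 1 := by rw [hsumv', Real.sqrt_one]
  have hsuppu' : {j | u' j ≠ 0} = {j | u j ≠ 0} := by
    ext j; simp [hu'def, ha.ne']
  have hsuppv' : {j | v' j ≠ 0} = {j | v j ≠ 0} := by
    ext j; simp [hv'def, hb.ne']
  have key : ∀ c : ℝ, c = 1 ∨ c = -1 →
      |((2:ℝ)⁻¹ • (u' + c • v')) ⬝ᵥ Δ.mulVec ((2:ℝ)⁻¹ • (u' + c • v'))| ≤ δ := by
    intro c hc
    apply hsparse
    · have hcv : Real.sqrt (∑ j, (c • v') j ^ 2) = 1 := by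
        have hcc : ∑ j, (c • v') j ^ 2 = ∑ j, v' j ^ 2 := by
          apply Finset.sum_congr rfl; intro j _
          rcases hc with h | h <;> simp [h]
        rw [hcc, hsumv', Real.sqrt_one]
      have h1 : Real.sqrt (∑ j, (u' j + (c • v') j) ^ 2) ≤ 2 := by
        calc Real.sqrt (∑ j, (u' j + (c • v') j) ^ 2)
            ≤ Real.sqrt (∑ j, u' j ^ 2) + Real.sqrt (∑ j, (c • v') j ^ 2) :=
              sqrt_sum_sq_add_le u' (c • v')
          _ ≤ 2 := by rw [hnu', hcv]; norm_num
      have h2 : ∑ j, ((2:ℝ)⁻¹ • (u' + c • v')) j ^ 2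
          = 4⁻¹ * ∑ j, (u' j + (c • v') j) ^ 2 := by
        rw [Finset.mul_sum]
        apply Finset.sum_congr rfl; intro j _
        simp only [Pi.smul_apply, Pi.add_apply, smul_eq_mul]; ring
      rw [h2, Real.sqrt_mul (by norm_num)]
      have h3 : Real.sqrt (4⁻¹ : ℝ) = 2⁻¹ := by
        rw [show ((4:ℝ)⁻¹) = (2⁻¹)^2 by norm_num, Real.sqrt_sq (by norm_num)]
      rw [h3]
      nlinarith [Real.sqrt_nonneg (∑ j, (u' j + (c • v') j) ^ 2)]
    · have hsub : {j | ((2:ℝ)⁻¹ • (u' + c • v')) j ≠ 0} ⊆ {j | u' j ≠ 0} ∪ {j | v' j ≠ 0} := by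
        intro j hj
        by_contra h
        simp only [Set.mem_union, Set.mem_setOf_eq] at h
        push_neg at h
        simp only [Set.mem_setOf_eq, Pi.smul_apply, Pi.add_apply, smul_eq_mul, h.1, h.2,
          mul_zero, add_zero, zero_add] at hj
        exact hj (by ring)
      calc {j | ((2:ℝ)⁻¹ • (u' + c • v')) j ≠ 0}.ncard
          ≤ ({j | u' j ≠ 0} ∪ {j | v' j ≠ 0}).ncard :=
            Set.ncard_le_ncard hsub (Set.toFinite _)
        _ ≤ {j | u' j ≠ 0}.ncard + {j | v' j ≠ 0}.ncard := Set.ncard_union_le _ _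
        _ ≤ s + s := by rw [hsuppu', hsuppv']; exact Nat.add_le_add hu hv
        _ = 2 * s := (two_mul s).symm
  have hplus := key 1 (Or.inl rfl)
  have hminus := key (-1) (Or.inr rfl)
  have hpol : ((2:ℝ)⁻¹ • (u' + (1:ℝ) • v')) ⬝ᵥ Δ.mulVec ((2:ℝ)⁻¹ • (u' + (1:ℝ) • v')) -
      ((2:ℝ)⁻¹ • (u' + (-1:ℝ) • v')) ⬝ᵥ Δ.mulVec ((2:ℝ)⁻¹ • (u' + (-1:ℝ) • v')) =
      u' ⬝ᵥ Δ.mulVec v' := by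
    have hsy := symm_form Δ hΔ v' u'
    simp only [Matrix.mulVec_smul, Matrix.mulVec_add, smul_dotProduct,
      dotProduct_smul, add_dotProduct, dotProduct_add, smul_eq_mul,
      one_smul, neg_smul, Matrix.mulVec_neg, neg_dotProduct, dotProduct_neg]
    rw [hsy]; ring
  have hB' : |u' ⬝ᵥ Δ.mulVec v'| ≤ 2 * δ := by
    rw [← hpol]
    calc |_ - _| ≤ |((2:ℝ)⁻¹ • (u' + (1:ℝ) • v')) ⬝ᵥ Δ.mulVec ((2:ℝ)⁻¹ • (u' + (1:ℝ) • v'))| +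
        |((2:ℝ)⁻¹ • (u' + (-1:ℝ) • v')) ⬝ᵥ Δ.mulVec ((2:ℝ)⁻¹ • (u' + (-1:ℝ) • v'))| :=
          abs_sub _ _
      _ ≤ δ + δ := add_le_add hplus hminus
      _ = 2 * δ := by ring
  have hscale : u ⬝ᵥ Δ.mulVec v = a * b * (u' ⬝ᵥ Δ.mulVec v') := by
    have hu'' : u = a • u' := by rw [hu'def, smul_smul, mul_inv_cancel₀ ha.ne', one_smul]
    have hv'' : v = b • v' := by rw [hv'def, smul_smul, mul_inv_cancel₀ hb.ne', one_smul]
    conv_lhs => rw [hu'', hv'']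
    simp only [Matrix.mulVec_smul, smul_dotProduct, dotProduct_smul, smul_eq_mul]
    ring
  rw [hscale, abs_mul, abs_mul, abs_of_pos ha, abs_of_pos hb]
  calc a * b * |u' ⬝ᵥ Δ.mulVec v'| ≤ a * b * (2 * δ) :=
        mul_le_mul_of_nonneg_left hB' (by positivity)
    _ = 2 * δ * (a * b) := by ring

lemma core_antitone {d s : ℕ} (hs : 1 ≤ s) (Δ : Matrix (Fin d) (Fin d) ℝ) (hΔ : Δ.IsSymm)
    (δ : ℝ)
    (hsparse : ∀ v : Fin d → ℝ, Real.sqrt (∑ j, v j ^ 2) ≤ 1 →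
      {j | v j ≠ 0}.ncard ≤ 2 * s → |v ⬝ᵥ Δ.mulVec v| ≤ δ)
    (y : Fin d → ℝ) (hy : ∀ i j : Fin d, i ≤ j → |y j| ≤ |y i|) :
    |y ⬝ᵥ Δ.mulVec y| ≤
      27 * δ * ((∑ j, y j ^ 2) + (1 / (s : ℝ)) * (∑ j, |y j|) ^ 2) := by
  have hδ : 0 ≤ δ := by simpa using hsparse 0 (by simp) (by simp)
  have hs0 : (0:ℝ) < s := by exact_mod_cast hs
  rcases Nat.eq_zero_or_pos d with hd | hd
  · subst hd
    simp [dotProduct]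
  set Y : ℕ → Fin d → ℝ := fun k i => if i.val / s = k then y i else 0 with hY
  have hblock_mem : ∀ i : Fin d, i.val / s ∈ Finset.range d := fun i =>
    Finset.mem_range.mpr (lt_of_le_of_lt (Nat.div_le_self _ _) i.isLt)
  have hsum : ∀ i, (∑ k ∈ Finset.range d, Y k i) = y i := by
    intro i
    rw [show (∑ k ∈ Finset.range d, Y k i)
        = ∑ k ∈ Finset.range d, (if i.val / s = k then y i else 0) from rfl,
      Finset.sum_ite_eq (Finset.range d) (i.val / s) (fun _ => y i)]
    exact if_pos (hblock_mem i)
  have hcard : ∀ k, (Finset.univ.filter fun i : Fin d => i.val / s = k).card ≤ s := by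
    intro k
    have h := Finset.card_le_card_of_injOn (fun i : Fin d => i.val)
      (s := Finset.univ.filter fun i : Fin d => i.val / s = k)
      (t := Finset.Ico (k * s) (k * s + s))
      (by
        intro i hi
        simp only [Finset.mem_coe, Finset.mem_filter, Finset.mem_univ, true_and] at hi
        rw [Finset.mem_coe, Finset.mem_Ico]
        constructor
        · calc k * s = (i.val / s) * s := by rw [hi]
            _ ≤ i.val := Nat.div_mul_le_self _ _
        · have : i.val / s < k + 1 := by omega
          have := (Nat.div_lt_iff_lt_mul (by omega : 0 < s)).mp this
          calc i.val < (k + 1) * s := this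
            _ = k * s + s := by ring)
      (fun i _ j _ h => Fin.val_injective h)
    simpa [Nat.card_Ico] using h
  have hsupp : ∀ k, {i | Y k i ≠ 0}.ncard ≤ s := by
    intro k
    have h1 : {i | Y k i ≠ 0} ⊆
        ↑(Finset.univ.filter fun i : Fin d => i.val / s = k) := by
      intro i hi
      simp only [Set.mem_setOf_eq] at hi
      simp only [Finset.coe_filter, Set.mem_setOf_eq, Finset.mem_univ, true_and]
      by_contra h
      exact hi (if_neg h)
    calc {i | Y k i ≠ 0}.ncard
        ≤ (↑(Finset.univ.filter fun i : Fin d => i.val / s = k) : Set (Fin d)).ncard :=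
          Set.ncard_le_ncard h1 (Set.toFinite _)
      _ = (Finset.univ.filter fun i : Fin d => i.val / s = k).card := Set.ncard_coe_finset _
      _ ≤ s := hcard k
  set ℓ : ℕ → ℝ := fun k => ∑ i, |Y k i| with hℓ
  have habsY : ∀ k (i : Fin d), |Y k i| = if i.val / s = k then |y i| else 0 := by
    intro k i
    by_cases h : i.val / s = k <;> simp [hY, h]
  have hℓ_eq : ∀ k, ℓ k = ∑ i ∈ Finset.univ.filter (fun i : Fin d => i.val / s = k), |y i| := by
    intro k
    rw [show ℓ k = ∑ i, |Y k i| from rfl]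
    simp only [habsY]
    exact (Finset.sum_filter _ _).symm
  have hℓ_nonneg : ∀ k, 0 ≤ ℓ k := fun k =>
    Finset.sum_nonneg fun i _ => abs_nonneg _
  have hℓtot : ∑ k ∈ Finset.range d, ℓ k = ∑ i, |y i| := by
    rw [show (∑ k ∈ Finset.range d, ℓ k) = ∑ k ∈ Finset.range d, ∑ i, |Y k i| from rfl,
      Finset.sum_comm]
    apply Finset.sum_congr rfl
    intro i _
    simp only [habsY]
    rw [Finset.sum_ite_eq (Finset.range d) (i.val / s) (fun _ => |y i|)]
    exact if_pos (hblock_mem i)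
  have hkey : ∀ k : ℕ, ∀ i : Fin d, i.val / s = k + 1 → (s:ℝ) * |y i| ≤ ℓ k := by
    intro k i hi
    set F := Finset.univ.filter (fun j : Fin d => j.val / s = k) with hF
    have hi2 : (k + 1) * s ≤ i.val := by
      calc (k + 1) * s = (i.val / s) * s := by rw [hi]
        _ ≤ i.val := Nat.div_mul_le_self _ _
    have hcardF : s ≤ F.card := by
      have hlt : ∀ t : Fin s, k * s + t.val < d := by
        intro t
        have h1 : k * s + t.val < (k + 1) * s := by
          have := t.isLt
          have : (k+1)*s = k*s + s := by ring
          omega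
        exact lt_of_lt_of_le (lt_of_lt_of_le h1 hi2) (le_of_lt i.isLt)
      have h := Finset.card_le_card_of_injOn
        (fun t : Fin s => (⟨k * s + t.val, hlt t⟩ : Fin d))
        (s := Finset.univ) (t := F)
        (by
          intro t _
          simp only [hF, Finset.mem_coe, Finset.mem_filter, Finset.mem_univ, true_and]
          show (k * s + t.val) / s = k
          rw [show k * s + t.val = t.val + s * k by ring,
            Nat.add_mul_div_left _ _ (by omega : 0 < s), Nat.div_eq_of_lt t.isLt, zero_add])
        (by
          intro t _ t' _ h
          have : k * s + t.val = k * s + t'.val := congrArg Fin.val h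
          exact Fin.val_injective (by omega))
      simpa using h
    have hle : ∀ j ∈ F, |y i| ≤ |y j| := by
      intro j hj
      simp only [hF, Finset.mem_filter, Finset.mem_univ, true_and] at hj
      apply hy j i
      by_contra h
      push_neg at h
      have : i.val ≤ j.val := le_of_lt h
      have := Nat.div_le_div_right (c := s) this
      omega
    calc (s:ℝ) * |y i| ≤ (F.card : ℝ) * |y i| := by
          apply mul_le_mul_of_nonneg_right _ (abs_nonneg _)
          exact_mod_cast hcardF
      _ = ∑ _j ∈ F, |y i| := by rw [Finset.sum_const, nsmul_eq_mul]
      _ ≤ ∑ j ∈ F, |y j| := Finset.sum_le_sum hle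
      _ = ℓ k := (hℓ_eq k).symm
  have hNsq : ∀ k : ℕ, ∑ i, Y (k+1) i ^ 2 ≤ ℓ k ^ 2 / s := by
    intro k
    have hb : ∀ i : Fin d, Y (k+1) i ^ 2 ≤ if i.val / s = k + 1 then (ℓ k / s)^2 else 0 := by
      intro i
      by_cases h : i.val / s = k + 1
      · rw [if_pos h]
        have h1 := hkey k i h
        have h2 : |y i| ≤ ℓ k / s := by
          rw [le_div_iff₀ hs0]; linarith
        have h3 : Y (k+1) i = y i := if_pos h
        calc Y (k+1) i ^ 2 = |y i| ^ 2 := by rw [h3, sq_abs]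
          _ ≤ (ℓ k / s) ^ 2 := pow_le_pow_left₀ (abs_nonneg _) h2 2
      · have h3 : Y (k+1) i = 0 := if_neg h
        rw [if_neg h, h3]
        norm_num
    calc ∑ i, Y (k+1) i ^ 2
        ≤ ∑ i : Fin d, (if i.val / s = k + 1 then (ℓ k / s)^2 else 0) :=
          Finset.sum_le_sum fun i _ => hb i
      _ = ((Finset.univ.filter fun i : Fin d => i.val / s = k + 1).card : ℝ) * (ℓ k / s)^2 := by
          rw [← Finset.sum_filter, Finset.sum_const, nsmul_eq_mul]
      _ ≤ (s:ℝ) * (ℓ k / s)^2 := by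
          apply mul_le_mul_of_nonneg_right _ (sq_nonneg _)
          exact_mod_cast hcard (k+1)
      _ = ℓ k ^ 2 / s := by field_simp
  set N : ℕ → ℝ := fun k => Real.sqrt (∑ i, Y k i ^ 2) with hNdef
  have hN_nonneg : ∀ k, 0 ≤ N k := fun k => Real.sqrt_nonneg _
  have hN0 : N 0 ≤ Real.sqrt (∑ j, y j ^ 2) := by
    apply Real.sqrt_le_sqrt
    apply Finset.sum_le_sum
    intro i _
    by_cases h : i.val / s = 0
    · rw [show Y 0 i = y i from if_pos h]
    · rw [show Y 0 i = 0 from if_neg h]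
      simpa using sq_nonneg (y i)
  have hNsucc : ∀ k, N (k+1) ≤ ℓ k / Real.sqrt s := by
    intro k
    calc N (k+1) ≤ Real.sqrt (ℓ k ^ 2 / s) := Real.sqrt_le_sqrt (hNsq k)
      _ = ℓ k / Real.sqrt s := by
          rw [Real.sqrt_div (sq_nonneg _), Real.sqrt_sq (hℓ_nonneg k)]
  have hsqrt_s : 0 < Real.sqrt s := Real.sqrt_pos.mpr hs0
  have hT : ∑ k ∈ Finset.range d, N k ≤
      Real.sqrt (∑ j, y j ^ 2) + (∑ j, |y j|) / Real.sqrt s := by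
    obtain ⟨m, hm⟩ : ∃ m, d = m + 1 := ⟨d - 1, by omega⟩
    calc ∑ k ∈ Finset.range d, N k
        = (∑ k ∈ Finset.range m, N (k+1)) + N 0 := by rw [hm, Finset.sum_range_succ']
      _ ≤ (∑ k ∈ Finset.range m, ℓ k / Real.sqrt s) + Real.sqrt (∑ j, y j ^ 2) :=
          add_le_add (Finset.sum_le_sum fun k _ => hNsucc k) hN0
      _ = (∑ k ∈ Finset.range m, ℓ k) / Real.sqrt s + Real.sqrt (∑ j, y j ^ 2) := by
          rw [Finset.sum_div]
      _ ≤ (∑ k ∈ Finset.range d, ℓ k) / Real.sqrt s + Real.sqrt (∑ j, y j ^ 2) := by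
          apply add_le_add_left
          have hsub : (∑ k ∈ Finset.range m, ℓ k) ≤ ∑ k ∈ Finset.range d, ℓ k :=
            Finset.sum_le_sum_of_subset_of_nonneg (Finset.range_subset_range.mpr (by omega))
              (fun k _ _ => hℓ_nonneg k)
          gcongr
      _ = Real.sqrt (∑ j, y j ^ 2) + (∑ j, |y j|) / Real.sqrt s := by
          rw [hℓtot]; ring
  have hdecomp : y ⬝ᵥ Δ.mulVec y =
      ∑ k ∈ Finset.range d, ∑ l ∈ Finset.range d, (Y k) ⬝ᵥ Δ.mulVec (Y l) := by
    have hyeq : y = ∑ k ∈ Finset.range d, Y k := by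
      funext i
      rw [Finset.sum_apply]
      exact (hsum i).symm
    conv_lhs => rw [hyeq]
    rw [show Δ.mulVec (∑ k ∈ Finset.range d, Y k) = ∑ l ∈ Finset.range d, Δ.mulVec (Y l) by
      have h := map_sum Δ.mulVecLin Y (Finset.range d)
      simp only [Matrix.mulVecLin_apply] at h
      exact h]
    rw [show (∑ k ∈ Finset.range d, Y k) ⬝ᵥ (∑ l ∈ Finset.range d, Δ.mulVec (Y l))
        = ∑ k ∈ Finset.range d, Y k ⬝ᵥ (∑ l ∈ Finset.range d, Δ.mulVec (Y l)) by
      simp only [dotProduct, Finset.sum_apply, Finset.sum_mul]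
      exact Finset.sum_comm]
    apply Finset.sum_congr rfl
    intro k _
    simp only [dotProduct, Finset.sum_apply, Finset.mul_sum]
    exact Finset.sum_comm
  have hbound : |y ⬝ᵥ Δ.mulVec y| ≤ 2 * δ * (∑ k ∈ Finset.range d, N k) ^ 2 := by
    rw [hdecomp]
    calc |∑ k ∈ Finset.range d, ∑ l ∈ Finset.range d, (Y k) ⬝ᵥ Δ.mulVec (Y l)|
        ≤ ∑ k ∈ Finset.range d, |∑ l ∈ Finset.range d, (Y k) ⬝ᵥ Δ.mulVec (Y l)| :=
          Finset.abs_sum_le_sum_abs _ _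
      _ ≤ ∑ k ∈ Finset.range d, ∑ l ∈ Finset.range d, |(Y k) ⬝ᵥ Δ.mulVec (Y l)| :=
          Finset.sum_le_sum fun k _ => Finset.abs_sum_le_sum_abs _ _
      _ ≤ ∑ k ∈ Finset.range d, ∑ l ∈ Finset.range d, 2 * δ * (N k * N l) :=
          Finset.sum_le_sum fun k _ => Finset.sum_le_sum fun l _ =>
            bilin_sparse Δ hΔ δ hsparse (Y k) (Y l) (hsupp k) (hsupp l)
      _ = 2 * δ * (∑ k ∈ Finset.range d, N k) ^ 2 := by
          rw [sq, Finset.sum_mul_sum, Finset.mul_sum]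
          exact Finset.sum_congr rfl fun k _ => by
            rw [Finset.mul_sum]
  set A := Real.sqrt (∑ j, y j ^ 2) with hA
  set B := (∑ j, |y j|) / Real.sqrt s with hB
  have hA2 : A ^ 2 = ∑ j, y j ^ 2 :=
    Real.sq_sqrt (Finset.sum_nonneg fun j _ => sq_nonneg _)
  have hB2 : B ^ 2 = (1 / (s:ℝ)) * (∑ j, |y j|) ^ 2 := by
    rw [hB, div_pow, Real.sq_sqrt hs0.le]
    ring
  have hT0 : 0 ≤ ∑ k ∈ Finset.range d, N k := Finset.sum_nonneg fun k _ => hN_nonneg k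
  have h1 : (∑ k ∈ Finset.range d, N k) ^ 2 ≤ (A + B) ^ 2 := by
    apply pow_le_pow_left₀ hT0 hT
  have h2 : (A + B) ^ 2 ≤ 2 * (A ^ 2 + B ^ 2) := by nlinarith [sq_nonneg (A - B)]
  have h3 : 0 ≤ A ^ 2 + B ^ 2 := by positivity
  calc |y ⬝ᵥ Δ.mulVec y| ≤ 2 * δ * (∑ k ∈ Finset.range d, N k) ^ 2 := hbound
    _ ≤ 2 * δ * (2 * (A ^ 2 + B ^ 2)) := by
        apply mul_le_mul_of_nonneg_left (le_trans h1 h2) (by linarith)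
    _ ≤ 27 * δ * (A ^ 2 + B ^ 2) := by nlinarith
    _ = 27 * δ * ((∑ j, y j ^ 2) + (1 / (s:ℝ)) * (∑ j, |y j|) ^ 2) := by
        rw [hA2, hB2]

/-- Extension lemma (Loh–Wainwright): from a uniform bound on the quadratic form
over 2s-sparse unit vectors to a bound over all vectors with an ℓ1 correction. -/
theorem stmt16 (d s : ℕ) (hs : 1 ≤ s) (Δ : Matrix (Fin d) (Fin d) ℝ) (hΔ : Δ.IsSymm)
    (δ : ℝ)
    (hsparse : ∀ v : Fin d → ℝ, Real.sqrt (∑ j, v j ^ 2) ≤ 1 →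
      {j | v j ≠ 0}.ncard ≤ 2 * s → |v ⬝ᵥ Δ.mulVec v| ≤ δ) :
    ∀ x : Fin d → ℝ, |x ⬝ᵥ Δ.mulVec x| ≤
      27 * δ * ((∑ j, x j ^ 2) + (1 / (s : ℝ)) * (∑ j, |x j|) ^ 2) := by
  intro x
  set σ : Equiv.Perm (Fin d) := Tuple.sort (fun i => -|x i|) with hσ
  set y : Fin d → ℝ := fun i => x (σ i) with hydef
  set Δ' : Matrix (Fin d) (Fin d) ℝ := Δ.submatrix σ σ with hΔ'def
  have hΔ' : Δ'.IsSymm := by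
    rw [Matrix.IsSymm, hΔ'def, Matrix.transpose_submatrix, hΔ.eq]
  have hy : ∀ i j : Fin d, i ≤ j → |y j| ≤ |y i| := by
    intro i j hij
    have := Tuple.monotone_sort (fun i => -|x i|) hij
    simp only [Function.comp_apply] at this
    simp only [hydef]
    linarith
  have hsparse' : ∀ v : Fin d → ℝ, Real.sqrt (∑ j, v j ^ 2) ≤ 1 →
      {j | v j ≠ 0}.ncard ≤ 2 * s → |v ⬝ᵥ Δ'.mulVec v| ≤ δ := by
    intro v hn hc
    set w : Fin d → ℝ := fun i => v (σ.symm i) with hwdef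
    have h1 : Δ'.mulVec v = fun i => Δ.mulVec w (σ i) := by
      rw [hΔ'def]
      have := Matrix.submatrix_mulVec_equiv Δ v (⇑σ) σ
      rw [this]
      rfl
    have h2 : v ⬝ᵥ Δ'.mulVec v = w ⬝ᵥ Δ.mulVec w := by
      rw [h1]
      show (∑ i, v i * Δ.mulVec w (σ i)) = ∑ i, w i * Δ.mulVec w i
      rw [← Equiv.sum_comp σ (fun i => w i * Δ.mulVec w i)]
      apply Finset.sum_congr rfl
      intro i _
      simp [hwdef]
    rw [h2]
    apply hsparse w
    · rw [← Equiv.sum_comp σ (fun j => w j ^ 2)]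
      simpa [hwdef] using hn
    · have : {j | w j ≠ 0} = ⇑σ '' {j | v j ≠ 0} := by
        rw [Equiv.image_eq_preimage_symm]
        ext j
        simp [hwdef]
      rw [this, Set.ncard_image_of_injective _ σ.injective]
      exact hc
  have hmain := core_antitone hs Δ' hΔ' δ hsparse' y hy
  have e1 : y ⬝ᵥ Δ'.mulVec y = x ⬝ᵥ Δ.mulVec x := by
    have h1 : Δ'.mulVec y = fun i => Δ.mulVec x (σ i) := by
      rw [hΔ'def]
      have := Matrix.submatrix_mulVec_equiv Δ y (⇑σ) σ
      rw [this]
      have : (y ∘ ⇑σ.symm) = x := by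
        funext i
        simp [hydef]
      rw [this]
      rfl
    rw [h1]
    show (∑ i, y i * Δ.mulVec x (σ i)) = ∑ i, x i * Δ.mulVec x i
    rw [← Equiv.sum_comp σ (fun i => x i * Δ.mulVec x i)]
  have e2 : ∑ j, y j ^ 2 = ∑ j, x j ^ 2 := Equiv.sum_comp σ (fun j => x j ^ 2)
  have e3 : ∑ j, |y j| = ∑ j, |x j| := Equiv.sum_comp σ (fun j => |x j|)
  rw [e1, e2, e3] at hmain
  exact hmain
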